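/- For every positive integer s, there exists an s-truncated tree code TC^(s) over input alphabet {0,1}^s and output alphabet {0,1}^{3s} (i.e., a family of online encoding maps sending, for each k ≤ s, strings in ({0,1}^s)^k to strings in ({0,1}^{3s})^k) whose distance is at least 1/2. -/

import Mathlib

open Finset

namespace TTCaux

abbrev V (s : ℕ) := Fin s → ZMod 2
abbrev W (s : ℕ) := Fin (3*s) → ZMod 2
abbrev Om (s : ℕ) := Fin s → Fin s → Matrix (Fin (3*s)) (Fin s) (ZMod 2)

def bz : Bool → ZMod 2 := fun b => cond b 1 0
def bup : ZMod 2 → Bool := fun z => decide (z = 1)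
lemma bup_inj : Function.Injective bup := by decide
lemma bz_inj : Function.Injective bz := by decide
lemma z2_add_self (z : ZMod 2) : z + z = 0 := by revert z; decide
lemma z2_add_eq_zero : ∀ a b : ZMod 2, a + b = 0 → a = b := by decide
lemma zmod2_eq_one : ∀ z : ZMod 2, z ≠ 0 → z = 1 := by decide

def matOf (s : ℕ) (M : Om s) (i j : ℕ) : Matrix (Fin (3*s)) (Fin s) (ZMod 2) :=
  if h : i < s ∧ j < s then M ⟨i, h.1⟩ ⟨j, h.2⟩ else 0

def chk (s : ℕ) (M : Om s) (d : ℕ → V s) (i : ℕ) : W s :=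
  ∑ j ∈ Finset.range (i+1), (matOf s M i j).mulVec (d j)

def Agr (s : ℕ) (M : Om s) (d : ℕ → V s) (l k : ℕ) : Finset ℕ :=
  (Finset.Ico l k).filter (fun i => chk s M d i = 0)

def Good (s : ℕ) (M : Om s) : Prop :=
  ∀ l k : ℕ, l < k → k ≤ s → ∀ d : ℕ → V s, (∀ j, j < l → d j = 0) →
    (∀ j, k ≤ j → d j = 0) → d l ≠ 0 → (Agr s M d l k).card ≤ (k - l)/2

def dOf (s : ℕ) (f : Fin s → V s) : ℕ → V s := fun j => if h : j < s then f ⟨j, h⟩ else 0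

lemma matOf_add (s : ℕ) (M M' : Om s) (i j : ℕ) :
    matOf s (M + M') i j = matOf s M i j + matOf s M' i j := by
  unfold matOf; split <;> simp [Pi.add_apply]

lemma chk_add (s : ℕ) (M M' : Om s) (d : ℕ → V s) (i : ℕ) :
    chk s (M + M') d i = chk s M d i + chk s M' d i := by
  unfold chk
  rw [← Finset.sum_add_distrib]
  refine Finset.sum_congr rfl fun j _ => ?_
  rw [matOf_add, Matrix.add_mulVec]


lemma chk_congr (s : ℕ) (M : Om s) (d d' : ℕ → V s) (i : ℕ)
    (h : ∀ j, j ≤ i → d j = d' j) : chk s M d i = chk s M d' i := by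
  unfold chk
  refine Finset.sum_congr rfl fun j hj => ?_
  rw [h j (by simpa [Nat.lt_succ_iff] using Finset.mem_range.mp hj)]


lemma sq_lt_two_pow (s : ℕ) : s * s < 2^(s+1) := by
  induction s with
  | zero => norm_num
  | succ n ih =>
    have h1 : n < 2^n := n.lt_two_pow_self
    have h2 : 2*n + 2 ≤ 2^(n+1) := by
      rw [pow_succ]; omega
    have : (n+1)*(n+1) = n*n + (2*n+1) := by ring
    rw [this, pow_succ 2 (n+1)]
    omega

lemma choose_le (m : ℕ) (hm : 1 ≤ m) : Nat.choose m (m/2+1) ≤ 2^(m-1) := by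
  set a := m/2 + 1 with ha
  have ham : a ≤ m := by omega
  have hne : a ≠ m - a := by omega
  have hsym : Nat.choose m (m - a) = Nat.choose m a := Nat.choose_symm ham
  have hsub : ({a, m - a} : Finset ℕ) ⊆ Finset.range (m+1) := by
    intro x hx
    simp only [Finset.mem_insert, Finset.mem_singleton] at hx
    rcases hx with rfl | rfl <;> simp [Finset.mem_range] <;> omega
  have hsum : ∑ x ∈ ({a, m - a} : Finset ℕ), Nat.choose m x ≤ ∑ x ∈ Finset.range (m+1), Nat.choose m x :=
    Finset.sum_le_sum_of_subset hsub
  rw [Finset.sum_pair hne, Nat.sum_range_choose] at hsum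
  have : 2 * Nat.choose m a ≤ 2^m := by omega
  have h2 : 2^m = 2 * 2^(m-1) := by
    rw [← pow_succ']
    congr 1
    omega
  omega

lemma arith (s m : ℕ) (hm : 1 ≤ m) (hms : m ≤ s) :
    Nat.choose m (m/2+1) * 2^(s*m) * 2^(s+1) ≤ 2^(3*s*(m/2+1)) := by
  have h1 : Nat.choose m (m/2+1) ≤ 2^(m-1) := choose_le m hm
  have hexp : (m-1) + (s*m + (s+1)) ≤ 3*s*(m/2+1) := by
    have hrw : 3*s*(m/2+1) = 3*(s*(m/2)) + 3*s := by ring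
    have h3 : 3*(s*m) ≤ 6*(s*(m/2)) + 3*s := by
      have hmm : m ≤ 2*(m/2)+1 := by omega
      calc 3*(s*m) ≤ 3*(s*(2*(m/2)+1)) :=
            Nat.mul_le_mul_left _ (Nat.mul_le_mul_left _ hmm)
        _ = 6*(s*(m/2)) + 3*s := by ring
    have h4 : 2*m ≤ s*m + s := by
      have h5 : 2*m ≤ s*(m+1) := by
        rcases Nat.lt_or_ge s 2 with h | h
        · interval_cases s <;> omega
        · nlinarith
      calc 2*m ≤ s*(m+1) := h5
        _ = s*m + s := by ring
    rw [hrw]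
    have hm1 : (m-1) + 1 = m := by omega
    set P := s*m with hP
    set Q := s*(m/2) with hQ
    omega
  calc Nat.choose m (m/2+1) * 2^(s*m) * 2^(s+1)
      ≤ 2^(m-1) * 2^(s*m) * 2^(s+1) :=
        Nat.mul_le_mul_right _ (Nat.mul_le_mul_right _ h1)
    _ = 2^((m-1) + (s*m + (s+1))) := by rw [← pow_add, ← pow_add, Nat.add_assoc]
    _ ≤ 2^(3*s*(m/2+1)) := Nat.pow_le_pow_right (by norm_num) hexp

lemma card_Dset (s l k : ℕ) (hk : k ≤ s) :
    (Finset.univ.filter (fun f : Fin s → V s =>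
      (∀ j : Fin s, (j.val < l ∨ k ≤ j.val) → f j = 0))).card ≤ (2^s)^(k-l) := by
  classical
  have hinj : Set.InjOn (fun (f : Fin s → V s) (r : Fin (k-l)) =>
      f ⟨l + r.val, by omega⟩)
      ((Finset.univ.filter (fun f : Fin s → V s =>
        (∀ j : Fin s, (j.val < l ∨ k ≤ j.val) → f j = 0))) : Finset _) := by
    intro f hf g hg hfg
    simp only [Finset.coe_filter, Set.mem_setOf_eq, Finset.mem_univ, true_and] at hf hg
    funext j
    rcases Nat.lt_or_ge j.val l with h | h
    · rw [hf j (Or.inl h), hg j (Or.inl h)]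
    rcases Nat.lt_or_ge j.val k with h2 | h2
    · have hr : j.val - l < k - l := by omega
      have := congrFun hfg ⟨j.val - l, hr⟩
      simpa only [show l + (j.val - l) = j.val by omega, Fin.eta] using this
    · rw [hf j (Or.inr h2), hg j (Or.inr h2)]
  calc (Finset.univ.filter (fun f : Fin s → V s =>
      (∀ j : Fin s, (j.val < l ∨ k ≤ j.val) → f j = 0))).card
      ≤ (Finset.univ : Finset (Fin (k-l) → V s)).card := by
        apply Finset.card_le_card_of_injOn _ (fun _ _ => Finset.mem_univ _) hinj
    _ = (2^s)^(k-l) := by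
        simp [Fintype.card_fun, ZMod.card]

lemma card_E (s l k : ℕ) (hk : k ≤ s) (A : Finset ℕ) (hA : A ⊆ Finset.Ico l k)
    (d : ℕ → V s) (hd : d l ≠ 0) :
    (Finset.univ.filter (fun M : Om s => ∀ i ∈ A, chk s M d i = 0)).card
      * (2^(3*s))^A.card ≤ Fintype.card (Om s) := by
  classical
  obtain ⟨c₀, hc₀⟩ := Function.ne_iff.mp hd
  have hdl : d l c₀ = 1 := zmod2_eq_one _ hc₀
  set F : Om s → (A → W s) := fun M a => chk s M d a.val with hF
  have hFadd : ∀ M M' : Om s, F (M + M') = F M + F M' := by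
    intro M M'; funext a; exact chk_add s M M' d a.val
  -- surjectivity witnesses
  have hsurj : ∀ c : (A → W s), ∃ Mc : Om s, F Mc = c := by
    intro c
    refine ⟨fun i j => if h : (i.val ∈ A) ∧ (j.val = l) then
      Matrix.of (fun b c' => if c' = c₀ then c ⟨i.val, h.1⟩ b else 0) else 0, ?_⟩
    funext a
    obtain ⟨a, haA⟩ := a
    have haIco := hA haA
    rw [Finset.mem_Ico] at haIco
    have has : a < s := lt_of_lt_of_le haIco.2 hk
    have hls : l < s := lt_of_le_of_lt haIco.1 has
    show chk s _ d a = c ⟨a, haA⟩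
    unfold chk
    rw [Finset.sum_eq_single_of_mem l (Finset.mem_range.mpr (by omega))]
    · have hmat : matOf s (fun i j => if h : (i.val ∈ A) ∧ (j.val = l) then
          Matrix.of (fun b c' => if c' = c₀ then c ⟨i.val, h.1⟩ b else 0) else 0) a l
          = Matrix.of (fun b c' => if c' = c₀ then c ⟨a, haA⟩ b else 0) := by
        unfold matOf
        exact (dif_pos ⟨has, hls⟩).trans (dif_pos ⟨haA, rfl⟩)
      rw [hmat]
      funext b
      show (∑ c' : Fin s, (if c' = c₀ then c ⟨a, haA⟩ b else 0) * d l c') = c ⟨a, haA⟩ b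
      rw [Finset.sum_eq_single_of_mem c₀ (Finset.mem_univ _)]
      · rw [if_pos rfl, hdl, mul_one]
      · intro c' _ hc'
        rw [if_neg hc', zero_mul]
    · intro j _ hj
      have hmat : matOf s (fun i j => if h : (i.val ∈ A) ∧ (j.val = l) then
          Matrix.of (fun b c' => if c' = c₀ then c ⟨i.val, h.1⟩ b else 0) else 0) a j = 0 := by
        unfold matOf
        split
        · exact dif_neg (fun hc => hj hc.2)
        · rfl
      rw [hmat, Matrix.zero_mulVec]
  -- the filter equals the zero fiber of F
  have hset : (Finset.univ.filter (fun M : Om s => ∀ i ∈ A, chk s M d i = 0))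
      = Finset.univ.filter (fun M : Om s => F M = 0) := by
    ext M
    simp only [Finset.mem_filter, Finset.mem_univ, true_and]
    constructor
    · intro h; funext a; exact h a.val a.prop
    · intro h i hi; exact congrFun h ⟨i, hi⟩
  rw [hset]
  -- fiber comparison
  have hfib : ∀ c : (A → W s),
      (Finset.univ.filter (fun M : Om s => F M = 0)).card
        ≤ (Finset.univ.filter (fun M : Om s => F M = c)).card := by
    intro c
    obtain ⟨Mc, hMc⟩ := hsurj c
    apply Finset.card_le_card_of_injOn (fun M => M + Mc)
    · intro M hM
      simp only [Finset.mem_coe, Finset.mem_filter, Finset.mem_univ, true_and] at hM ⊢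
      rw [hFadd, hM, hMc, zero_add]
    · intro M₁ _ M₂ _ h
      exact add_right_cancel h
  have htot : Fintype.card (Om s)
      = ∑ c ∈ (Finset.univ : Finset (A → W s)),
          (Finset.univ.filter (fun M : Om s => F M = c)).card := by
    rw [← Finset.card_univ]
    exact Finset.card_eq_sum_card_fiberwise (fun x _ => Finset.mem_univ _)
  have hcardAW : (Finset.univ : Finset (A → W s)).card = (2^(3*s))^A.card := by
    rw [Finset.card_univ]
    rw [Fintype.card_fun]
    congr 1
    · rw [Fintype.card_fun]
      simp [ZMod.card]
    · exact Fintype.card_coe A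
  calc (Finset.univ.filter (fun M : Om s => F M = 0)).card * (2^(3*s))^A.card
      = ∑ _c ∈ (Finset.univ : Finset (A → W s)),
          (Finset.univ.filter (fun M : Om s => F M = 0)).card := by
        rw [Finset.sum_const, smul_eq_mul, hcardAW, mul_comm]
    _ ≤ ∑ c ∈ (Finset.univ : Finset (A → W s)),
          (Finset.univ.filter (fun M : Om s => F M = c)).card :=
        Finset.sum_le_sum (fun c _ => hfib c)
    _ = Fintype.card (Om s) := htot.symm

lemma exists_good (s : ℕ) (hs : 0 < s) : ∃ M : Om s, Good s M := by
  classical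
  set Bad := Finset.univ.filter (fun M : Om s => ¬ Good s M) with hBad
  set cOm := Fintype.card (Om s) with hcOm
  -- the per-(l,k) building blocks
  set P := fun (l k : ℕ) => (Finset.Ico l k).powersetCard ((k-l)/2+1) with hP
  set D := fun (l k : ℕ) => (Finset.univ : Finset (Fin s → V s)).filter
    (fun f => (∀ j : Fin s, (j.val < l ∨ k ≤ j.val) → f j = 0) ∧ dOf s f l ≠ 0) with hD
  set E := fun (A : Finset ℕ) (f : Fin s → V s) =>
    Finset.univ.filter (fun M : Om s => ∀ i ∈ A, chk s M (dOf s f) i = 0) with hE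
  have hcov : Bad ⊆ (Finset.range s).biUnion (fun l => (Finset.Icc (l+1) s).biUnion
      (fun k => (P l k).biUnion (fun A => (D l k).biUnion (fun f => E A f)))) := by
    intro M hM
    simp only [hBad, Finset.mem_filter, Finset.mem_univ, true_and] at hM
    unfold Good at hM
    push_neg at hM
    obtain ⟨l, k, hlk, hk, d, hlow, hhigh, hdl, hcard⟩ := hM
    have hsub1 : Agr s M d l k ⊆ Finset.Ico l k := Finset.filter_subset _ _
    obtain ⟨A, hAsub, hAcard⟩ := Finset.exists_subset_card_eq
      (show (k-l)/2 + 1 ≤ (Agr s M d l k).card from hcard)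
    have hls : l < s := lt_of_lt_of_le hlk hk
    refine Finset.mem_biUnion.mpr ⟨l, Finset.mem_range.mpr hls, ?_⟩
    refine Finset.mem_biUnion.mpr ⟨k, Finset.mem_Icc.mpr ⟨hlk, hk⟩, ?_⟩
    refine Finset.mem_biUnion.mpr ⟨A, Finset.mem_powersetCard.mpr
      ⟨hAsub.trans hsub1, hAcard⟩, ?_⟩
    have hdOf : ∀ j, j < s → dOf s (fun j : Fin s => d j.val) j = d j := by
      intro j hj
      simp only [dOf, dif_pos hj]
    refine Finset.mem_biUnion.mpr ⟨fun j : Fin s => d j.val, ?_, ?_⟩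
    · simp only [hD, Finset.mem_filter, Finset.mem_univ, true_and]
      constructor
      · intro j hj
        rcases hj with h | h
        · exact hlow _ h
        · exact hhigh _ h
      · rw [hdOf l hls]; exact hdl
    · simp only [hE, Finset.mem_filter, Finset.mem_univ, true_and]
      intro i hi
      have hik : i ∈ Finset.Ico l k := hsub1 (hAsub hi)
      rw [Finset.mem_Ico] at hik
      have : chk s M (dOf s (fun j : Fin s => d j.val)) i = chk s M d i :=
        chk_congr s M _ _ i (fun j hj => hdOf j (by omega))
      rw [this]
      exact (Finset.mem_filter.mp (hAsub hi)).2
  -- per (l,k) bound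
  have hinner : ∀ l k : ℕ, l < k → k ≤ s →
      ((P l k).biUnion (fun A => (D l k).biUnion (fun f => E A f))).card * 2^(s+1) ≤ cOm := by
    intro l k hlk hk
    set m := k - l with hm
    have hm1 : 1 ≤ m := by omega
    have hms : m ≤ s := by omega
    set a₀ := m/2 + 1 with ha₀
    set X := (2^(3*s))^a₀ with hX
    have hXpos : 0 < X := by positivity
    have hEcard : ∀ A ∈ P l k, ∀ f ∈ D l k, (E A f).card * X ≤ cOm := by
      intro A hA f hf
      obtain ⟨hAsub, hAcard⟩ := Finset.mem_powersetCard.mp hA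
      simp only [hD, Finset.mem_filter, Finset.mem_univ, true_and] at hf
      have := card_E s l k hk A hAsub (dOf s f) hf.2
      rwa [hAcard] at this
    have hsum : ((P l k).biUnion (fun A => (D l k).biUnion (fun f => E A f))).card * X
        ≤ Nat.choose m a₀ * (2^s)^m * cOm := by
      calc ((P l k).biUnion (fun A => (D l k).biUnion (fun f => E A f))).card * X
          ≤ (∑ A ∈ P l k, ∑ f ∈ D l k, (E A f).card) * X := by
            apply Nat.mul_le_mul_right
            exact le_trans (Finset.card_biUnion_le)
              (Finset.sum_le_sum fun A _ => Finset.card_biUnion_le)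
        _ = ∑ A ∈ P l k, ∑ f ∈ D l k, (E A f).card * X := by
            rw [Finset.sum_mul]
            exact Finset.sum_congr rfl fun A _ => Finset.sum_mul _ _ _
        _ ≤ ∑ A ∈ P l k, ∑ f ∈ D l k, cOm :=
            Finset.sum_le_sum fun A hA => Finset.sum_le_sum fun f hf => hEcard A hA f hf
        _ = (P l k).card * ((D l k).card * cOm) := by
            rw [Finset.sum_const, Finset.sum_const, smul_eq_mul, smul_eq_mul]
        _ ≤ Nat.choose m a₀ * ((2^s)^m * cOm) := by
            apply Nat.mul_le_mul
            · simp only [hP]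
              rw [Finset.card_powersetCard, Nat.card_Ico]
            · apply Nat.mul_le_mul_right
              refine le_trans (Finset.card_le_card ?_) (card_Dset s l k hk)
              intro f hf
              simp only [hD, Finset.mem_filter] at hf ⊢
              exact ⟨hf.1, hf.2.1⟩
        _ = Nat.choose m a₀ * (2^s)^m * cOm := by ring
    have harith : Nat.choose m a₀ * (2^s)^m * 2^(s+1) ≤ X := by
      calc Nat.choose m a₀ * (2^s)^m * 2^(s+1)
          = Nat.choose m (m/2+1) * 2^(s*m) * 2^(s+1) := by rw [← pow_mul]
        _ ≤ 2^(3*s*(m/2+1)) := arith s m hm1 hms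
        _ = X := by rw [hX, ← pow_mul]
    -- combine: inner * 2^(s+1) * X ≤ choose * (2^s)^m * 2^(s+1) * cOm ≤ X * cOm
    refine Nat.le_of_mul_le_mul_right ?_ hXpos
    calc ((P l k).biUnion (fun A => (D l k).biUnion (fun f => E A f))).card * 2^(s+1) * X
        = ((P l k).biUnion (fun A => (D l k).biUnion (fun f => E A f))).card * X * 2^(s+1) := by
          ring
      _ ≤ Nat.choose m a₀ * (2^s)^m * cOm * 2^(s+1) := Nat.mul_le_mul_right _ hsum
      _ = Nat.choose m a₀ * (2^s)^m * 2^(s+1) * cOm := by ring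
      _ ≤ X * cOm := Nat.mul_le_mul_right _ harith
      _ = cOm * X := by ring
  -- total bound
  have htotal : Bad.card * 2^(s+1) < cOm * 2^(s+1) := by
    calc Bad.card * 2^(s+1)
        ≤ (∑ l ∈ Finset.range s, ∑ k ∈ Finset.Icc (l+1) s,
            ((P l k).biUnion (fun A => (D l k).biUnion (fun f => E A f))).card) * 2^(s+1) := by
          apply Nat.mul_le_mul_right
          refine le_trans (Finset.card_le_card hcov) ?_
          refine le_trans Finset.card_biUnion_le ?_
          exact Finset.sum_le_sum fun l _ => Finset.card_biUnion_le
      _ = ∑ l ∈ Finset.range s, ∑ k ∈ Finset.Icc (l+1) s,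
            ((P l k).biUnion (fun A => (D l k).biUnion (fun f => E A f))).card * 2^(s+1) := by
          rw [Finset.sum_mul]
          exact Finset.sum_congr rfl fun l _ => Finset.sum_mul _ _ _
      _ ≤ ∑ l ∈ Finset.range s, ∑ k ∈ Finset.Icc (l+1) s, cOm := by
          refine Finset.sum_le_sum fun l hl => Finset.sum_le_sum fun k hk => ?_
          rw [Finset.mem_Icc] at hk
          exact hinner l k (by omega) hk.2
      _ ≤ ∑ l ∈ Finset.range s, s * cOm := by
          refine Finset.sum_le_sum fun l _ => ?_
          rw [Finset.sum_const, smul_eq_mul, Nat.card_Icc]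
          exact Nat.mul_le_mul_right _ (by omega)
      _ = s * s * cOm := by rw [Finset.sum_const, smul_eq_mul, Finset.card_range]; ring
      _ < 2^(s+1) * cOm := by
          have hc : 0 < cOm := Fintype.card_pos
          exact (Nat.mul_lt_mul_right hc).mpr (sq_lt_two_pow s)
      _ = cOm * 2^(s+1) := by ring
  have hlt : Bad.card < cOm := Nat.lt_of_mul_lt_mul_right htotal
  by_contra hcon
  push_neg at hcon
  have : Finset.univ ⊆ Bad := by
    intro M _
    simp only [hBad, Finset.mem_filter, Finset.mem_univ, true_and]
    exact hcon M
  have := Finset.card_le_card this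
  rw [Finset.card_univ] at this
  omega


end TTCaux

open TTCaux in

theorem truncated_tree_code_large_alphabet (s : ℕ) (hs : 0 < s) :
    ∃ φ : (i : Fin s) → (Fin (i.val + 1) → (Fin s → Bool)) → (Fin (3 * s) → Bool),
      ∀ (k : ℕ) (hk : k ≤ s) (x x' : Fin k → (Fin s → Bool)) (ℓ : ℕ) (hℓ : ℓ < k),
        (∀ i : Fin k, i.val < ℓ → x i = x' i) → x ⟨ℓ, hℓ⟩ ≠ x' ⟨ℓ, hℓ⟩ →
        ((k : ℝ) - ℓ) / 2 ≤
          (hammingDist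
            (fun i : Fin k => φ ⟨i.val, lt_of_lt_of_le i.isLt hk⟩
              (fun j => x ⟨j.val, lt_of_le_of_lt (Nat.lt_succ_iff.mp j.isLt) i.isLt⟩))
            (fun i : Fin k => φ ⟨i.val, lt_of_lt_of_le i.isLt hk⟩
              (fun j => x' ⟨j.val, lt_of_le_of_lt (Nat.lt_succ_iff.mp j.isLt) i.isLt⟩)) : ℝ) := by
  classical
  obtain ⟨M, hM⟩ := exists_good s hs
  refine ⟨fun i p b => bup ((∑ j : Fin (i.val+1),
    (M i ⟨j.val, lt_of_le_of_lt (Nat.lt_succ_iff.mp j.isLt) i.isLt⟩).mulVec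
      (fun c => bz (p j c))) b), ?_⟩
  intro k hk x x' ℓ hℓ hpre hsplit
  have hℓk : ℓ < k := hℓ
  -- difference pattern (in char 2, sum = difference)
  set vx : ℕ → V s := fun j => if h : j < k then (fun c => bz (x ⟨j, h⟩ c)) else 0 with hvx
  set vx' : ℕ → V s := fun j => if h : j < k then (fun c => bz (x' ⟨j, h⟩ c)) else 0 with hvx'
  set d : ℕ → V s := fun j => vx j + vx' j with hd
  -- the two output streams
  set out : Fin k → W s := fun i => ∑ j ∈ Finset.range (i.val+1), (matOf s M i.val j).mulVec (vx j) with hout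
  set out' : Fin k → W s := fun i => ∑ j ∈ Finset.range (i.val+1), (matOf s M i.val j).mulVec (vx' j) with hout'
  have hchk : ∀ i : Fin k, chk s M d i.val = out i + out' i := by
    intro i
    rw [hout, hout']
    unfold chk
    rw [← Finset.sum_add_distrib]
    refine Finset.sum_congr rfl fun j _ => ?_
    rw [hd]
    exact Matrix.mulVec_add _ _ _
  -- the goal's encoded streams coincide with bup ∘ out
  have houtx : (fun i : Fin k => fun b => bup ((∑ j : Fin (i.val+1),
      (M ⟨i.val, lt_of_lt_of_le i.isLt hk⟩ ⟨j.val, lt_of_le_of_lt (Nat.lt_succ_iff.mp j.isLt) (lt_of_lt_of_le i.isLt hk)⟩).mulVec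
        (fun c => bz (x ⟨j.val, lt_of_le_of_lt (Nat.lt_succ_iff.mp j.isLt) i.isLt⟩ c))) b))
      = fun i : Fin k => fun b => bup (out i b) := by
    funext i b
    congr 1
    show _ = (∑ j ∈ Finset.range (i.val+1), (matOf s M i.val j).mulVec (vx j)) b
    rw [← Fin.sum_univ_eq_sum_range (fun j =>
      (matOf s M i.val j).mulVec (vx j)), Finset.sum_apply, Finset.sum_apply]
    refine Finset.sum_congr rfl fun j _ => ?_
    have hjk : (j : ℕ) < k := lt_of_le_of_lt (Nat.lt_succ_iff.mp j.isLt) i.isLt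
    have hjs : (j : ℕ) < s := lt_of_lt_of_le hjk hk
    have his : i.val < s := lt_of_lt_of_le i.isLt hk
    have hm : matOf s M i.val j.val = M ⟨i.val, his⟩ ⟨j.val, hjs⟩ := dif_pos ⟨his, hjs⟩
    rw [hm, hvx]
    simp only [dif_pos hjk]
  have houtx' : (fun i : Fin k => fun b => bup ((∑ j : Fin (i.val+1),
      (M ⟨i.val, lt_of_lt_of_le i.isLt hk⟩ ⟨j.val, lt_of_le_of_lt (Nat.lt_succ_iff.mp j.isLt) (lt_of_lt_of_le i.isLt hk)⟩).mulVec
        (fun c => bz (x' ⟨j.val, lt_of_le_of_lt (Nat.lt_succ_iff.mp j.isLt) i.isLt⟩ c))) b))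
      = fun i : Fin k => fun b => bup (out' i b) := by
    funext i b
    congr 1
    show _ = (∑ j ∈ Finset.range (i.val+1), (matOf s M i.val j).mulVec (vx' j)) b
    rw [← Fin.sum_univ_eq_sum_range (fun j =>
      (matOf s M i.val j).mulVec (vx' j)), Finset.sum_apply, Finset.sum_apply]
    refine Finset.sum_congr rfl fun j _ => ?_
    have hjk : (j : ℕ) < k := lt_of_le_of_lt (Nat.lt_succ_iff.mp j.isLt) i.isLt
    have hjs : (j : ℕ) < s := lt_of_lt_of_le hjk hk
    have his : i.val < s := lt_of_lt_of_le i.isLt hk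
    have hm : matOf s M i.val j.val = M ⟨i.val, his⟩ ⟨j.val, hjs⟩ := dif_pos ⟨his, hjs⟩
    rw [hm, hvx']
    simp only [dif_pos hjk]
  -- equivalence: encoded symbols equal iff checksum vanishes
  have hequiv : ∀ i : Fin k,
      ((fun b => bup (out i b)) = (fun b => bup (out' i b))) ↔ chk s M d i.val = 0 := by
    intro i
    rw [hchk i]
    constructor
    · intro h
      have h2 : out i = out' i := by
        funext b
        exact bup_inj (congrFun h b)
      rw [h2]
      funext b
      exact z2_add_self _
    · intro h
      funext b
      have := congrFun h b
      simp only [Pi.add_apply, Pi.zero_apply] at this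
      rw [z2_add_eq_zero _ _ this]
  -- apply goodness
  have hGood := hM ℓ k hℓk hk d ?_ ?_ ?_
  rotate_left
  · intro j hj
    have hjk : j < k := lt_trans hj hℓk
    rw [hd, hvx, hvx']
    simp only [dif_pos hjk]
    have := hpre ⟨j, hjk⟩ hj
    rw [this]
    funext c
    exact z2_add_self _
  · intro j hj
    rw [hd, hvx, hvx']
    simp only [dif_neg (not_lt.mpr hj), add_zero]
  · rw [hd, hvx, hvx']
    simp only [dif_pos hℓk]
    intro hcon
    apply hsplit
    funext c
    have := congrFun hcon c
    simp only [Pi.add_apply, Pi.zero_apply] at this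
    exact bz_inj (z2_add_eq_zero _ _ this)
  -- disagreement count
  set m := k - ℓ with hm
  have hdis : m - m/2 ≤ ((Finset.Ico ℓ k).filter (fun i => ¬ chk s M d i = 0)).card := by
    have hsplitcard := Finset.card_filter_add_card_filter_not
      (s := Finset.Ico ℓ k) (p := fun i => chk s M d i = 0)
    rw [Nat.card_Ico] at hsplitcard
    have : (Agr s M d ℓ k).card ≤ m/2 := hGood
    unfold Agr at this
    omega
  -- inject into the hamming distance
  have hinj : ((Finset.Ico ℓ k).filter (fun i => ¬ chk s M d i = 0)).card ≤
      hammingDist (fun i : Fin k => fun b => bup (out i b))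
        (fun i : Fin k => fun b => bup (out' i b)) := by
    have hk0 : 0 < k := lt_of_le_of_lt (Nat.zero_le _) hℓk
    unfold hammingDist
    apply Finset.card_le_card_of_injOn (fun i => (⟨i % k, Nat.mod_lt _ hk0⟩ : Fin k))
    · intro i hi
      simp only [Finset.mem_coe, Finset.mem_filter, Finset.mem_Ico] at hi
      have hik : i < k := hi.1.2
      have : i % k = i := Nat.mod_eq_of_lt hik
      simp only [Finset.mem_coe, Finset.mem_filter, Finset.mem_univ, true_and]
      intro hcon
      apply hi.2
      have h0 := (hequiv ⟨i % k, Nat.mod_lt _ hk0⟩).mp hcon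
      simpa [this] using h0
    · intro i hi i' hi' h
      simp only [Finset.mem_coe, Finset.mem_filter, Finset.mem_Ico] at hi hi'
      have : i % k = i' % k := congrArg Fin.val h
      rwa [Nat.mod_eq_of_lt hi.1.2, Nat.mod_eq_of_lt hi'.1.2] at this
  -- cast to ℝ
  rw [houtx, houtx']
  have hfin : m - m/2 ≤ hammingDist (fun i : Fin k => fun b => bup (out i b))
      (fun i : Fin k => fun b => bup (out' i b)) := le_trans hdis hinj
  have hc1 : ((m - m/2 : ℕ) : ℝ) ≤ (hammingDist (fun i : Fin k => fun b => bup (out i b))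
      (fun i : Fin k => fun b => bup (out' i b)) : ℝ) := by exact_mod_cast hfin
  have hc2 : ((m - m/2 : ℕ) : ℝ) = (m : ℝ) - ((m/2 : ℕ) : ℝ) := by
    rw [Nat.cast_sub (Nat.div_le_self m 2)]
  have hc3 : ((m/2 : ℕ) : ℝ) ≤ (m : ℝ)/2 := by
    exact_mod_cast Nat.cast_div_le
  have hc4 : ((k : ℝ) - ℓ) = (m : ℝ) := by
    rw [hm, Nat.cast_sub (le_of_lt hℓk)]
  rw [hc4]
  linarith
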